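/- For orthogonal pure imaginary octonions p and q, the set of linear maps spanned by all \(L_p\) (p pure imaginary) together with all commutators \([L_p, L_q]\) is closed under the commutator bracket; explicitly, for mutually orthogonal pure imaginary unit octonions p, q, r, s one has \([L_p, L_q] = 2 L_p \circ L_q\), \([L_p, [L_p,L_q]] = -4 L_q\), \([[L_r,L_p],[L_p,L_q]] = -4[L_r,L_q]\), \([L_r,[L_p,L_q]] = 0\), and \([[L_p,L_q],[L_r,L_s]] = 0\). -/

import Mathlib

noncomputable section
open Quaternion

/-- The octonions, as the Cayley–Dickson double of the real quaternions. -/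
@[ext] structure Oct : Type where
  x : ℍ[ℝ]
  y : ℍ[ℝ]

namespace Oct

instance : Zero Oct := ⟨⟨0, 0⟩⟩
instance : One Oct := ⟨⟨1, 0⟩⟩
instance : Add Oct := ⟨fun a b => ⟨a.x + b.x, a.y + b.y⟩⟩
instance : Neg Oct := ⟨fun a => ⟨-a.x, -a.y⟩⟩
instance : Sub Oct := ⟨fun a b => ⟨a.x - b.x, a.y - b.y⟩⟩
instance : SMul ℝ Oct := ⟨fun r a => ⟨r • a.x, r • a.y⟩⟩
/-- Cayley–Dickson multiplication. -/
instance : Mul Oct := ⟨fun a b => ⟨a.x * b.x - star b.y * a.y, b.y * a.x + a.y * star b.x⟩⟩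

@[simp] lemma zero_x : (0 : Oct).x = 0 := rfl
@[simp] lemma zero_y : (0 : Oct).y = 0 := rfl
@[simp] lemma one_x : (1 : Oct).x = 1 := rfl
@[simp] lemma one_y : (1 : Oct).y = 0 := rfl
@[simp] lemma add_x (a b : Oct) : (a + b).x = a.x + b.x := rfl
@[simp] lemma add_y (a b : Oct) : (a + b).y = a.y + b.y := rfl
@[simp] lemma neg_x (a : Oct) : (-a).x = -a.x := rfl
@[simp] lemma neg_y (a : Oct) : (-a).y = -a.y := rfl
@[simp] lemma sub_x (a b : Oct) : (a - b).x = a.x - b.x := rfl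
@[simp] lemma sub_y (a b : Oct) : (a - b).y = a.y - b.y := rfl
@[simp] lemma smul_x (r : ℝ) (a : Oct) : (r • a).x = r • a.x := rfl
@[simp] lemma smul_y (r : ℝ) (a : Oct) : (r • a).y = r • a.y := rfl
@[simp] lemma mul_x (a b : Oct) : (a * b).x = a.x * b.x - star b.y * a.y := rfl
@[simp] lemma mul_y (a b : Oct) : (a * b).y = b.y * a.x + a.y * star b.x := rfl

instance : AddCommGroup Oct where
  add_assoc a b c := by ext <;> simp [add_assoc]
  zero_add a := by ext <;> simp
  add_zero a := by ext <;> simp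
  add_comm a b := by ext <;> simp [add_comm]
  neg_add_cancel a := by ext <;> simp
  sub_eq_add_neg a b := by ext <;> simp [sub_eq_add_neg]
  nsmul := nsmulRec
  zsmul := zsmulRec

instance : Module ℝ Oct where
  one_smul a := by ext <;> simp
  mul_smul r s a := by ext <;> simp [mul_smul]
  smul_zero r := by ext <;> simp
  smul_add r a b := by ext <;> simp
  add_smul r s a := by ext <;> simp [add_smul]
  zero_smul a := by ext <;> simp

/-- Octonion conjugation. -/
def conj (a : Oct) : Oct := ⟨star a.x, -a.y⟩

/-- Real part. -/
def re (a : Oct) : ℝ := a.x.re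

/-- The inner product `⟨a,b⟩ = Re (a * conj b)`. -/
def inner (a b : Oct) : ℝ := re (a * conj b)

/-- Left multiplication. -/
def L (a : Oct) : Oct → Oct := fun v => a * v

/-- Right multiplication. -/
def R (a : Oct) : Oct → Oct := fun v => v * a

lemma mul_add' (a u v : Oct) : a * (u + v) = a * u + a * v := by
  ext <;> simp [mul_add, add_mul] <;> abel

lemma add_mul' (a b u : Oct) : (a + b) * u = a * u + b * u := by
  ext <;> simp [mul_add, add_mul] <;> abel

lemma mul_smul' (r : ℝ) (a u : Oct) : a * (r • u) = r • (a * u) := by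
  ext <;> simp [mul_smul_comm, smul_mul_assoc, smul_sub, smul_add]

lemma smul_mul' (r : ℝ) (a u : Oct) : (r • a) * u = r • (a * u) := by
  ext <;> simp [mul_smul_comm, smul_mul_assoc, smul_sub, smul_add]

/-- Left multiplication as a real-linear map. -/
def Llin (a : Oct) : Oct →ₗ[ℝ] Oct where
  toFun v := a * v
  map_add' u v := mul_add' a u v
  map_smul' r u := mul_smul' r a u

/-- The imaginary quaternion units. -/
def qi : ℍ[ℝ] := ⟨0, 1, 0, 0⟩
def qj : ℍ[ℝ] := ⟨0, 0, 1, 0⟩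
def qk : ℍ[ℝ] := ⟨0, 0, 0, 1⟩

/-- The standard imaginary basis units of the octonions. -/
def i : Oct := ⟨qi, 0⟩
def j : Oct := ⟨qj, 0⟩
def k : Oct := ⟨qk, 0⟩
def l : Oct := ⟨0, 1⟩
def il : Oct := ⟨0, qi⟩
def jl : Oct := ⟨0, qj⟩
def kl : Oct := ⟨0, qk⟩

/-- The standard basis of the octonions. -/
def basisSet : Set Oct := {1, i, j, k, l, il, jl, kl}

/-- The imaginary standard basis units. -/
def imSet : Set Oct := {i, j, k, l, il, jl, kl}

end Oct

/-- Commutator of endomorphisms of the octonions, as plain maps. -/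
def cOm (f g : Oct → Oct) : Oct → Oct := f ∘ g - g ∘ f

namespace Oct

lemma re_zero' {a : Oct} (h : conj a = -a) : a.x.re = 0 := by
  have hx : star a.x = -a.x := congrArg Oct.x h
  have := congrArg QuaternionAlgebra.re hx
  simp [Quaternion.re_star] at this
  linarith

set_option maxHeartbeats 1000000 in
lemma key (a b v : Oct) : a*(b*v) + b*(a*v) = (a*b+b*a)*v := by
  ext <;>
  · simp only [mul_x, mul_y, add_x, add_y, Quaternion.re_mul, Quaternion.imI_mul,
      Quaternion.imJ_mul, Quaternion.imK_mul, Quaternion.re_add, Quaternion.imI_add,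
      Quaternion.imJ_add, Quaternion.imK_add, Quaternion.re_sub, Quaternion.imI_sub,
      Quaternion.imJ_sub, Quaternion.imK_sub, Quaternion.re_star, Quaternion.imI_star,
      Quaternion.imJ_star, Quaternion.imK_star]
    ring

set_option maxHeartbeats 1000000 in
lemma anticomm {a b : Oct} (ha : conj a = -a) (hb : conj b = -b)
    (hab : inner a b = 0) : a*b + b*a = 0 := by
  have ha' := re_zero' ha
  have hb' := re_zero' hb
  unfold Oct.inner Oct.re Oct.conj at hab
  simp only [mul_x, Quaternion.re_sub, Quaternion.re_mul, Quaternion.re_star,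
    Quaternion.imI_star, Quaternion.imJ_star, Quaternion.imK_star,
    Oct.neg_y, Quaternion.re_neg, Quaternion.imI_neg, Quaternion.imJ_neg,
    Quaternion.imK_neg] at hab
  ext <;>
  · simp only [mul_x, mul_y, add_x, add_y, zero_x, zero_y, Quaternion.re_mul,
      Quaternion.imI_mul, Quaternion.imJ_mul, Quaternion.imK_mul, Quaternion.re_add,
      Quaternion.imI_add, Quaternion.imJ_add, Quaternion.imK_add, Quaternion.re_sub,
      Quaternion.imI_sub, Quaternion.imJ_sub, Quaternion.imK_sub, Quaternion.re_star,
      Quaternion.imI_star, Quaternion.imJ_star, Quaternion.imK_star, Quaternion.re_zero,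
      Quaternion.imI_zero, Quaternion.imJ_zero, Quaternion.imK_zero, ha', hb']
    first
    | ring1
    | linear_combination (-2:ℝ) * hab + (2 * b.x.re) * ha'

lemma zero_mul' (v : Oct) : (0 : Oct) * v = 0 := by ext <;> simp
lemma neg_one_mul' (v : Oct) : (-1 : Oct) * v = -v := by ext <;> simp
lemma mul_neg' (a v : Oct) : a * (-v) = -(a * v) := by
  ext <;> simp <;> abel
lemma mul_sub' (a u v : Oct) : a * (u - v) = a * u - a * v := by
  ext <;> simp [mul_sub, sub_mul] <;> abel

lemma op_anticomm {a b : Oct} (h : a*b + b*a = 0) (v : Oct) :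
    b*(a*v) = -(a*(b*v)) := by
  have := key a b v
  rw [h, zero_mul'] at this
  exact eq_neg_of_add_eq_zero_right this

lemma op_sq {a : Oct} (h : a*a = -1) (v : Oct) : a*(a*v) = -v := by
  have hk := key a a v
  rw [h] at hk
  have h2 : (2:ℝ) • (a*(a*v)) = (2:ℝ) • (-v) := by
    rw [two_smul, two_smul, hk]
    have : ((-1 : Oct) + -1) * v = -v + -v := by
      rw [add_mul', neg_one_mul']
    rw [this]
  exact smul_right_injective Oct two_ne_zero h2

lemma self_mul_neg_one {a : Oct} (h1 : conj a = -a) (h2 : a * conj a = 1) :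
    a * a = -1 := by
  rw [h1, mul_neg'] at h2
  rw [← neg_neg (a*a), h2]

end Oct

open Oct in
/-- The span of left multiplications and their commutators is closed under the
bracket: for mutually orthogonal pure imaginary unit octonions `p, q, r, s`,
`[L p, L q] = 2 L p ∘ L q`, `[L p,[L p, L q]] = -4 L q`,
`[[L r, L p],[L p, L q]] = -4 [L r, L q]`, `[L r, [L p, L q]] = 0` and
`[[L p, L q],[L r, L s]] = 0`. -/
theorem so8_closure (p q r s : Oct)
    (hp : conj p = -p) (hq : conj q = -q) (hr : conj r = -r) (hs : conj s = -s)
    (hpu : p * conj p = 1) (hqu : q * conj q = 1) (hru : r * conj r = 1)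
    (hsu : s * conj s = 1)
    (hpq : inner p q = 0) (hpr : inner p r = 0) (hps : inner p s = 0)
    (hqr : inner q r = 0) (hqs : inner q s = 0) (hrs : inner r s = 0) :
    cOm (L p) (L q) = (2 : ℝ) • (L p ∘ L q) ∧
    cOm (L p) (cOm (L p) (L q)) = (-4 : ℝ) • L q ∧
    cOm (cOm (L r) (L p)) (cOm (L p) (L q)) = (-4 : ℝ) • cOm (L r) (L q) ∧
    cOm (L r) (cOm (L p) (L q)) = 0 ∧
    cOm (cOm (L p) (L q)) (cOm (L r) (L s)) = 0 := by
  have Spp := op_sq (self_mul_neg_one hp hpu)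
  have Sqq := op_sq (self_mul_neg_one hq hqu)
  have Srr := op_sq (self_mul_neg_one hr hru)
  have Sss := op_sq (self_mul_neg_one hs hsu)
  have Wqp := op_anticomm (anticomm hp hq hpq)
  have Wpr := op_anticomm (add_comm (r*p) (p*r) ▸ anticomm hp hr hpr)
  have Wps := op_anticomm (add_comm (s*p) (p*s) ▸ anticomm hp hs hps)
  have Wqr := op_anticomm (add_comm (r*q) (q*r) ▸ anticomm hq hr hqr)
  have Wqs := op_anticomm (add_comm (s*q) (q*s) ▸ anticomm hq hs hqs)
  have Wsr := op_anticomm (anticomm hr hs hrs)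
  refine ⟨?_, ?_, ?_, ?_, ?_⟩ <;>
  · funext v
    simp only [cOm, L, Pi.sub_apply, Function.comp_apply, Pi.smul_apply, Pi.zero_apply,
      mul_sub', mul_neg', Spp, Sqq, Srr, Sss, Wqp, Wpr, Wps, Wqr, Wqs, Wsr, neg_neg]
    module
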